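/- arXiv:2203.08857 — 2 statements merged into one kernel-verified Lean document; each statement's English description precedes it below -/
import Mathlib

section
/- For every real x ≥ 2, the Gamma function satisfies Γ(x) ≤ (x/2)^{x−1}. -/
open Real Filter Finset Set Nat Topology

noncomputable def En (n : ℕ) (x : ℝ) : ℝ :=
  (Real.log ((n ! : ℕ) : ℝ) - Real.log 2) + x * (Real.log (n : ℝ) + Real.log 2)
    - x * Real.log x - ∑ j ∈ Finset.range n, Real.log (x + ((j : ℝ) + 1))

lemma En_hasDerivAt (n : ℕ) {x : ℝ} (hx : 0 < x) :
    HasDerivAt (En n)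
      ((Real.log (n : ℝ) + Real.log 2) - (Real.log x + 1)
        - ∑ j ∈ Finset.range n, (x + ((j : ℝ) + 1))⁻¹) x := by
  have h1 : HasDerivAt (fun y : ℝ =>
      (Real.log ((n ! : ℕ) : ℝ) - Real.log 2) + y * (Real.log (n : ℝ) + Real.log 2))
      (Real.log (n : ℝ) + Real.log 2) x := by
    simpa using ((hasDerivAt_id x).mul_const (Real.log (n : ℝ) + Real.log 2)).const_add
      (Real.log ((n ! : ℕ) : ℝ) - Real.log 2)
  have h2 : HasDerivAt (fun y : ℝ => y * Real.log y) (Real.log x + 1) x :=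
    Real.hasDerivAt_mul_log hx.ne'
  have h3 : HasDerivAt (fun y : ℝ => ∑ j ∈ Finset.range n, Real.log (y + ((j : ℝ) + 1)))
      (∑ j ∈ Finset.range n, (x + ((j : ℝ) + 1))⁻¹) x := by
    apply HasDerivAt.fun_sum
    intro j _
    have hpos : 0 < x + ((j : ℝ) + 1) := by positivity
    have := ((hasDerivAt_id x).add_const ((j : ℝ) + 1)).log hpos.ne'
    simpa [one_div] using this
  exact (h1.sub h2).sub h3

lemma En_hasDerivAt2 (n : ℕ) {x : ℝ} (hx : 0 < x) :
    HasDerivAt (fun y => (Real.log (n : ℝ) + Real.log 2) - (Real.log y + 1)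
        - ∑ j ∈ Finset.range n, (y + ((j : ℝ) + 1))⁻¹)
      (-(x⁻¹) + ∑ j ∈ Finset.range n, ((x + ((j : ℝ) + 1))^2)⁻¹) x := by
  have h2 : HasDerivAt (fun y : ℝ => Real.log y + 1) x⁻¹ x :=
    (Real.hasDerivAt_log hx.ne').add_const 1
  have h3 : HasDerivAt (fun y : ℝ => ∑ j ∈ Finset.range n, (y + ((j : ℝ) + 1))⁻¹)
      (∑ j ∈ Finset.range n, -(((x + ((j : ℝ) + 1))^2)⁻¹)) x := by
    apply HasDerivAt.fun_sum
    intro j _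
    have hpos : 0 < x + ((j : ℝ) + 1) := by positivity
    have := ((hasDerivAt_id x).add_const ((j : ℝ) + 1)).fun_inv hpos.ne'
    simpa [one_div, neg_div] using this
  have := ((hasDerivAt_const x (Real.log (n:ℝ) + Real.log 2)).fun_sub h2).fun_sub h3
  simpa [Finset.sum_neg_distrib, sub_eq_add_neg] using this

lemma En_concave (n : ℕ) : ConcaveOn ℝ (Set.Ioi (0:ℝ)) (En n) := by
  apply concaveOn_of_hasDerivWithinAt2_nonpos (convex_Ioi 0)
    (f' := fun y => (Real.log (n : ℝ) + Real.log 2) - (Real.log y + 1)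
        - ∑ j ∈ Finset.range n, (y + ((j : ℝ) + 1))⁻¹)
    (f'' := fun y => -(y⁻¹) + ∑ j ∈ Finset.range n, ((y + ((j : ℝ) + 1))^2)⁻¹)
  · intro y hy
    exact (En_hasDerivAt n hy).continuousAt.continuousWithinAt
  · rw [interior_Ioi]
    intro y hy
    exact (En_hasDerivAt n hy).hasDerivWithinAt
  · rw [interior_Ioi]
    intro y hy
    exact (En_hasDerivAt2 n hy).hasDerivWithinAt
  · rw [interior_Ioi]
    intro y hy
    have hy' : (0:ℝ) < y := hy
    have key : ∑ j ∈ Finset.range n, ((y + ((j : ℝ) + 1))^2)⁻¹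
        ≤ ∑ j ∈ Finset.range n, ((y + (j : ℝ))⁻¹ - (y + ((j : ℝ) + 1))⁻¹) := by
      apply Finset.sum_le_sum
      intro j _
      have h0 : 0 < y + (j : ℝ) := by positivity
      have h1 : 0 < y + ((j : ℝ) + 1) := by positivity
      have e : (y + (j : ℝ))⁻¹ - (y + ((j : ℝ) + 1))⁻¹
          = ((y + (j : ℝ)) * (y + ((j : ℝ) + 1)))⁻¹ := by
        field_simp
        ring
      rw [e]
      apply inv_anti₀ (by positivity)
      nlinarith [h0.le, h1.le]
    have tel := Finset.sum_range_sub' (fun i => (y + (i : ℝ))⁻¹) n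
    push_cast at tel
    rw [tel] at key
    have hn : (0:ℝ) ≤ (y + (n : ℝ))⁻¹ := by positivity
    have : ∑ j ∈ Finset.range n, ((y + ((j : ℝ) + 1))^2)⁻¹ ≤ y⁻¹ := by
      rw [add_zero] at key
      linarith
    linarith


lemma En_eq (n : ℕ) (hn : 1 ≤ n) {y : ℝ} (hy : 0 < y) :
    En n y = Real.log (Real.GammaSeq y n) - (y - 1) * Real.log (y / 2) := by
  have hn' : (0:ℝ) < (n : ℝ) := by exact_mod_cast hn
  have hfac : (0:ℝ) < ((n ! : ℕ) : ℝ) := by exact_mod_cast n.factorial_pos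
  have hprod : ∀ j ∈ Finset.range (n+1), y + (j : ℝ) ≠ 0 := fun j _ => by positivity
  have hprodpos : 0 < ∏ j ∈ Finset.range (n+1), (y + (j : ℝ)) :=
    Finset.prod_pos fun j _ => by positivity
  rw [Real.GammaSeq, Real.log_div (by positivity) hprodpos.ne',
    Real.log_mul (by positivity) hfac.ne', Real.log_rpow hn',
    Real.log_prod hprod, Finset.sum_range_succ',
    Real.log_div hy.ne' two_ne_zero]
  push_cast
  rw [add_zero]
  unfold En
  ring


noncomputable def L (y : ℝ) : ℝ := Real.log (Real.Gamma y) - (y - 1) * Real.log (y / 2)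

lemma En_tendsto {y : ℝ} (hy : 0 < y) :
    Tendsto (fun n => En n y) atTop (𝓝 (L y)) := by
  have h1 : Tendsto (fun n => Real.log (Real.GammaSeq y n) - (y - 1) * Real.log (y / 2))
      atTop (𝓝 (L y)) := by
    exact (((Real.continuousAt_log (Real.Gamma_pos_of_pos hy).ne').tendsto).comp
      (Real.GammaSeq_tendsto_Gamma y)).sub_const _
  refine h1.congr' ?_
  filter_upwards [eventually_ge_atTop 1] with n hn
  exact (En_eq n hn hy).symm

lemma L_two : L 2 = 0 := by
  unfold L
  rw [Real.Gamma_two]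
  norm_num

lemma L_three_half : 0 ≤ L (3/2) := by
  have hG : Real.Gamma (3/2) = Real.sqrt π / 2 := by
    have h := Real.Gamma_add_one (s := 1/2) (by norm_num)
    rw [Real.Gamma_one_half_eq] at h
    norm_num at h ⊢
    linarith [h]
  unfold L
  rw [hG]
  have h1 : Real.log (Real.sqrt π / 2) = Real.log π / 2 - Real.log 2 := by
    rw [Real.log_div (by positivity) two_ne_zero, Real.log_sqrt pi_pos.le]
  have h2 : Real.log ((3:ℝ)/2 / 2) = Real.log 3 - Real.log 2 - Real.log 2 := by
    rw [Real.log_div (by norm_num) two_ne_zero, Real.log_div (by norm_num) two_ne_zero]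
  have h3 : Real.log 3 ≤ Real.log π :=
    Real.log_le_log (by norm_num) (by linarith [Real.pi_gt_three])
  rw [h1, h2]
  ring_nf
  nlinarith [h3]

/-- For every real `x ≥ 2`, the Gamma function satisfies `Γ(x) ≤ (x/2)^(x-1)`. -/
theorem Gamma_le_half_pow (x : ℝ) (hx : 2 ≤ x) :
    Real.Gamma x ≤ (x / 2) ^ (x - 1) := by
  have hx0 : (0:ℝ) < x := by linarith
  set a : ℝ := (x - 2) / (x - 3/2) with ha_def
  set b : ℝ := (1/2) / (x - 3/2) with hb_def
  have hden : (0:ℝ) < x - 3/2 := by linarith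
  have ha : 0 ≤ a := div_nonneg (by linarith) hden.le
  have hb : 0 < b := div_pos (by norm_num) hden
  have hab : a + b = 1 := by
    rw [ha_def, hb_def, ← add_div, div_eq_one_iff_eq hden.ne']
    ring
  have hcomb : a * (3/2 : ℝ) + b * x = 2 := by
    rw [ha_def, hb_def, div_mul_eq_mul_div, div_mul_eq_mul_div, ← add_div,
      div_eq_iff hden.ne']
    ring
  have hineq : ∀ n, a * En n (3/2) + b * En n x ≤ En n 2 := by
    intro n
    have h := (En_concave n).2 (show (3/2:ℝ) ∈ Set.Ioi (0:ℝ) by norm_num)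
      (show x ∈ Set.Ioi (0:ℝ) from hx0) ha hb.le hab
    simpa [smul_eq_mul, hcomb] using h
  have hT1 : Tendsto (fun n => a * En n (3/2) + b * En n x) atTop
      (𝓝 (a * L (3/2) + b * L x)) :=
    ((En_tendsto (by norm_num)).const_mul a).add ((En_tendsto hx0).const_mul b)
  have hT2 : Tendsto (fun n => En n 2) atTop (𝓝 (L 2)) := En_tendsto (by norm_num)
  have hle : a * L (3/2) + b * L x ≤ L 2 := le_of_tendsto_of_tendsto' hT1 hT2 hineq
  have hLx : L x ≤ 0 := by
    rw [L_two] at hle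
    nlinarith [mul_nonneg ha L_three_half, hb]
  have hΓ : 0 < Real.Gamma x := Real.Gamma_pos_of_pos hx0
  have hhalf : (0:ℝ) < x / 2 := by linarith
  have hlog : Real.log (Real.Gamma x) ≤ (x - 1) * Real.log (x / 2) := by
    have : L x = Real.log (Real.Gamma x) - (x - 1) * Real.log (x / 2) := rfl
    linarith [hLx, this ▸ hLx]
  calc Real.Gamma x = Real.exp (Real.log (Real.Gamma x)) := (Real.exp_log hΓ).symm
    _ ≤ Real.exp ((x - 1) * Real.log (x / 2)) := Real.exp_le_exp.mpr hlog
    _ = (x / 2) ^ (x - 1) := by rw [Real.rpow_def_of_pos hhalf, mul_comm]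
end

section
/- Let M ∈ ℝ^{m×n} have rank r with compact SVD M = UΣVᵀ, and define P^⊥(A) = UUᵀA + AVVᵀ − UUᵀAVVᵀ and P(A) = A − P^⊥(A). Then for every matrix E ∈ ℝ^{m×n}, the nuclear norm satisfies ‖M + E‖_* ≥ ‖M‖_* + ‖P(E)‖_* − ‖P^⊥(E)‖_*. -/
open Matrix

/-- The nuclear norm of a real matrix: `‖M‖_* = trace (√(MᴴM))`. -/
noncomputable def nuclearNorm {m n : ℕ} (M : Matrix (Fin m) (Fin n) ℝ) : ℝ :=
  ((Matrix.posSemidef_conjTranspose_mul_self M).1.eigenvectorUnitary.1 *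
    diagonal ((RCLike.ofReal : ℝ → ℝ) ∘ Real.sqrt ∘
      (Matrix.posSemidef_conjTranspose_mul_self M).1.eigenvalues) *
    (star (Matrix.posSemidef_conjTranspose_mul_self M).1.eigenvectorUnitary :
      Matrix (Fin n) (Fin n) ℝ)).trace

/-- The square root of a positive semidefinite matrix (as in older Mathlib). -/
noncomputable def Matrix.PosSemidef.sqrt {k : ℕ} {X : Matrix (Fin k) (Fin k) ℝ}
    (hX : X.PosSemidef) : Matrix (Fin k) (Fin k) ℝ :=
  hX.1.eigenvectorUnitary.1 * diagonal ((RCLike.ofReal : ℝ → ℝ) ∘ Real.sqrt ∘ hX.1.eigenvalues) *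
    (star hX.1.eigenvectorUnitary : Matrix (Fin k) (Fin k) ℝ)

open scoped MatrixOrder in
lemma Matrix.PosSemidef.sqrt_eq_cfc {k : ℕ} {X : Matrix (Fin k) (Fin k) ℝ}
    (hX : X.PosSemidef) : hX.sqrt = CFC.sqrt X := by
  rw [CFC.sqrt_eq_cfc, cfc_nnreal_eq_real _ X, hX.1.cfc_eq]
  simp only [IsHermitian.cfc, Matrix.PosSemidef.sqrt]
  congr 3
  funext i
  simp [Real.coe_sqrt, Real.coe_toNNReal', hX.eigenvalues_nonneg i]

open scoped MatrixOrder in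
lemma Matrix.PosSemidef.posSemidef_sqrt {k : ℕ} {X : Matrix (Fin k) (Fin k) ℝ}
    (hX : X.PosSemidef) : hX.sqrt.PosSemidef := by
  rw [hX.sqrt_eq_cfc]; exact (CFC.sqrt_nonneg X).posSemidef

open scoped MatrixOrder in
lemma Matrix.PosSemidef.sqrt_mul_self {k : ℕ} {X : Matrix (Fin k) (Fin k) ℝ}
    (hX : X.PosSemidef) : hX.sqrt * hX.sqrt = X := by
  rw [hX.sqrt_eq_cfc]; exact CFC.sqrt_mul_sqrt_self X hX.nonneg

open scoped MatrixOrder in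
lemma Matrix.PosSemidef.eq_sqrt_of_sq_eq {k : ℕ} {A X : Matrix (Fin k) (Fin k) ℝ}
    (hA : A.PosSemidef) (hX : X.PosSemidef) (h : A ^ 2 = X) : A = hX.sqrt := by
  rw [hX.sqrt_eq_cfc]; exact (CFC.sqrt_unique (by rw [← sq]; exact h) hA.nonneg).symm

namespace NucAux

lemma dot_mulVec_mulVec {m n : ℕ} (A : Matrix (Fin m) (Fin n) ℝ) (x y : Fin n → ℝ) :
    (A *ᵥ x) ⬝ᵥ (A *ᵥ y) = x ⬝ᵥ ((Aᴴ * A) *ᵥ y) := by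
  rw [← mulVec_mulVec, dotProduct_mulVec x, vecMul_conjTranspose]
  simp


lemma dotProduct_sumv {k m : ℕ} (x : Fin m → ℝ) (f : Fin k → Fin m → ℝ) :
    x ⬝ᵥ (∑ j, f j) = ∑ j, x ⬝ᵥ f j := by
  simp only [dotProduct, Finset.sum_apply, Finset.mul_sum]
  exact Finset.sum_comm

lemma sumv_dotProduct {k m : ℕ} (f : Fin k → Fin m → ℝ) (x : Fin m → ℝ) :
    (∑ j, f j) ⬝ᵥ x = ∑ j, f j ⬝ᵥ x := by
  simp only [dotProduct, Finset.sum_apply, Finset.sum_mul]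
  exact Finset.sum_comm

/-- Bessel-type inequality for pairwise-orthogonal families of vectors of norm ≤ 1. -/
lemma bessel {k m : ℕ} (u : Fin k → Fin m → ℝ)
    (horth : ∀ i j, i ≠ j → u i ⬝ᵥ u j = 0) (hnorm : ∀ i, u i ⬝ᵥ u i ≤ 1)
    (x : Fin m → ℝ) : ∑ j, (u j ⬝ᵥ x) ^ 2 ≤ x ⬝ᵥ x := by
  set c : Fin k → ℝ := fun j => u j ⬝ᵥ x with hc
  have hw : (0:ℝ) ≤ (x - ∑ j, c j • u j) ⬝ᵥ (x - ∑ j, c j • u j) :=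
    Finset.sum_nonneg fun i _ => mul_self_nonneg _
  have hxS : x ⬝ᵥ (∑ j, c j • u j) = ∑ j, c j ^ 2 := by
    rw [dotProduct_sumv]
    refine Finset.sum_congr rfl fun j _ => ?_
    rw [dotProduct_smul, dotProduct_comm]
    simp [hc, sq, smul_eq_mul]
  have hSx : (∑ j, c j • u j) ⬝ᵥ x = ∑ j, c j ^ 2 := by
    rw [dotProduct_comm]; exact hxS
  have hSS : (∑ j, c j • u j) ⬝ᵥ (∑ j, c j • u j) = ∑ j, c j ^ 2 * (u j ⬝ᵥ u j) := by
    rw [sumv_dotProduct]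
    refine Finset.sum_congr rfl fun i _ => ?_
    rw [smul_dotProduct, dotProduct_sumv, smul_eq_mul]
    rw [Finset.mul_sum]
    rw [Finset.sum_eq_single i]
    · rw [dotProduct_smul, smul_eq_mul]; ring
    · intro j _ hj
      rw [dotProduct_smul, horth i j (Ne.symm hj)]
      simp
    · intro h; exact absurd (Finset.mem_univ i) h
  have hexp : (x - ∑ j, c j • u j) ⬝ᵥ (x - ∑ j, c j • u j)
      = x ⬝ᵥ x - 2 * ∑ j, c j ^ 2 + ∑ j, c j ^ 2 * (u j ⬝ᵥ u j) := by
    rw [sub_dotProduct, dotProduct_sub, dotProduct_sub, hxS, hSx, hSS]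
    ring
  have hT : ∑ j, c j ^ 2 * (u j ⬝ᵥ u j) ≤ ∑ j, c j ^ 2 :=
    Finset.sum_le_sum fun j _ => by
      nlinarith [sq_nonneg (c j), hnorm j]
  rw [hexp] at hw
  have : ∑ j, c j ^ 2 ≤ x ⬝ᵥ x := by linarith
  simpa [hc] using this

/-- SVD-type data for a real matrix. -/
lemma exists_data {m n : ℕ} (A : Matrix (Fin m) (Fin n) ℝ) :
    ∃ (σ : Fin n → ℝ) (u : Fin n → Fin m → ℝ) (v : Fin n → Fin n → ℝ),
      (∀ i, 0 ≤ σ i) ∧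
      (∀ i j, i ≠ j → u i ⬝ᵥ u j = 0) ∧ (∀ i, u i ⬝ᵥ u i ≤ 1) ∧
      (∀ i j, i ≠ j → v i ⬝ᵥ v j = 0) ∧ (∀ i, v i ⬝ᵥ v i ≤ 1) ∧
      (∀ x : Fin n → ℝ, x = ∑ j, (v j ⬝ᵥ x) • v j) ∧
      (∀ j, A *ᵥ v j = σ j • u j) ∧
      (∀ j, u j ⬝ᵥ (A *ᵥ v j) = σ j) ∧
      nuclearNorm A = ∑ j, σ j := by
  have hH := Matrix.posSemidef_conjTranspose_mul_self A
  set H := Aᴴ * A with hHdef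
  set lam : Fin n → ℝ := hH.1.eigenvalues with hlam
  set v : Fin n → Fin n → ℝ := fun j => ⇑(hH.1.eigenvectorBasis j) with hv
  set σ : Fin n → ℝ := fun j => Real.sqrt (lam j) with hσ
  set u : Fin n → Fin m → ℝ := fun j => if lam j = 0 then 0 else (σ j)⁻¹ • (A *ᵥ v j) with hu
  have hvdot : ∀ i j, v i ⬝ᵥ v j = if i = j then 1 else 0 := by
    intro i j
    have := orthonormal_iff_ite.mp (hH.1.eigenvectorBasis.orthonormal) i j
    rw [PiLp.inner_apply] at this
    simpa [dotProduct, hv, mul_comm] using this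
  have hlam_nonneg : ∀ j, 0 ≤ lam j := fun j => hH.eigenvalues_nonneg j
  have hAv : ∀ i j, (A *ᵥ v i) ⬝ᵥ (A *ᵥ v j) = if i = j then lam j else 0 := by
    intro i j
    rw [dot_mulVec_mulVec, ← hHdef]
    have hmv : H *ᵥ v j = lam j • v j := hH.1.mulVec_eigenvectorBasis j
    rw [hmv, dotProduct_smul, hvdot i j, smul_eq_mul]
    by_cases h : i = j <;> simp [h]
  have hAv0 : ∀ j, lam j = 0 → A *ᵥ v j = 0 := by
    intro j hj
    have := hAv j j
    rw [if_pos rfl, hj] at this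
    exact dotProduct_self_eq_zero.mp this
  have hσpos : ∀ j, lam j ≠ 0 → 0 < σ j := by
    intro j hj
    exact Real.sqrt_pos.mpr (lt_of_le_of_ne (hlam_nonneg j) (Ne.symm hj))
  have hAveq : ∀ j, A *ᵥ v j = σ j • u j := by
    intro j
    by_cases h : lam j = 0
    · simp [hu, h, hAv0 j h]
    · simp only [hu, if_neg h, smul_smul]
      rw [mul_inv_cancel₀ (ne_of_gt (hσpos j h)), one_smul]
  have hσsq : ∀ j, σ j * σ j = lam j := fun j => Real.mul_self_sqrt (hlam_nonneg j)
  have hudot : ∀ i j, u i ⬝ᵥ u j =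
      if lam i = 0 ∨ lam j = 0 then 0 else if i = j then 1 else 0 := by
    intro i j
    by_cases hi : lam i = 0
    · simp [hu, hi]
    by_cases hj : lam j = 0
    · simp [hu, hi, hj]
    simp only [hu, if_neg hi, if_neg hj, smul_dotProduct, dotProduct_smul, smul_eq_mul]
    rw [hAv i j]
    by_cases h : i = j
    · subst h
      rw [if_pos rfl, if_neg (by tauto), if_pos rfl]
      have h0 : σ i * σ i ≠ 0 := by rw [hσsq i]; exact hi
      field_simp
      rw [sq, hσsq i]; exact div_self hi
    · rw [if_neg h, if_neg (by tauto), if_neg h]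
      ring
  refine ⟨σ, u, v, fun i => Real.sqrt_nonneg _, ?_, ?_, ?_, ?_, ?_, hAveq, ?_, ?_⟩
  · intro i j hij
    by_cases h : lam i = 0 ∨ lam j = 0 <;> simp [hudot i j, h, hij]
  · intro i
    rw [hudot i i]
    by_cases h : lam i = 0 <;> simp [h]
  · intro i j hij; rw [hvdot i j, if_neg hij]
  · intro i; rw [hvdot i i, if_pos rfl]
  · intro x
    have := hH.1.eigenvectorBasis.sum_repr' (WithLp.toLp 2 x)
    have h2 := congrArg (fun y : EuclideanSpace ℝ (Fin n) => (y : Fin n → ℝ)) this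
    simp only [PiLp.inner_apply, RCLike.inner_apply, starRingEnd_apply, star_trivial] at h2
    conv_lhs => rw [← h2]
    rw [WithLp.ofLp_sum]
    refine Finset.sum_congr rfl fun j _ => ?_
    rw [WithLp.ofLp_smul]
    congr 1
    simp only [hv, dotProduct]
    exact Finset.sum_congr rfl fun k _ => mul_comm _ _
  · intro j
    rw [hAveq j, dotProduct_smul, smul_eq_mul, hudot j j]
    by_cases h : lam j = 0
    · simp [h, hσ]
    · simp [h]
  · have : nuclearNorm A = hH.sqrt.trace := rfl
    rw [this, Matrix.PosSemidef.sqrt, trace_mul_cycle]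
    have h1 : (star hH.1.eigenvectorUnitary.1 : Matrix (Fin n) (Fin n) ℝ) * hH.1.eigenvectorUnitary.1 = 1 :=
      hH.1.eigenvectorUnitary.prop.1
    rw [h1, one_mul, trace_diagonal]
    simp [σ]
    rfl


lemma dual_bound {m n : ℕ} (A : Matrix (Fin m) (Fin n) ℝ)
    (u : Fin n → Fin m → ℝ) (v : Fin n → Fin n → ℝ)
    (huo : ∀ i j, i ≠ j → u i ⬝ᵥ u j = 0) (hun : ∀ i, u i ⬝ᵥ u i ≤ 1)
    (hvo : ∀ i j, i ≠ j → v i ⬝ᵥ v j = 0) (hvn : ∀ i, v i ⬝ᵥ v i ≤ 1) :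
    ∑ j, u j ⬝ᵥ (A *ᵥ v j) ≤ nuclearNorm A := by
  obtain ⟨σ, p, q, hσ, hpo, hpn, hqo, hqn, hcomp, hAq, huAv, hnn⟩ := exists_data A
  have key : ∀ j, u j ⬝ᵥ (A *ᵥ v j) = ∑ i, σ i * ((q i ⬝ᵥ v j) * (u j ⬝ᵥ p i)) := by
    intro j
    conv_lhs => rw [hcomp (v j)]
    have : A *ᵥ (∑ i, (q i ⬝ᵥ v j) • q i) = ∑ i, (q i ⬝ᵥ v j) • (A *ᵥ q i) := by
      rw [← A.mulVecLin_apply, map_sum]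
      simp only [Matrix.mulVecLin_apply, Matrix.mulVec_smul]
    rw [this, dotProduct_sumv]
    refine Finset.sum_congr rfl fun i _ => ?_
    rw [hAq i, dotProduct_smul, dotProduct_smul, smul_eq_mul, smul_eq_mul]
    ring
  calc ∑ j, u j ⬝ᵥ (A *ᵥ v j)
      = ∑ j, ∑ i, σ i * ((q i ⬝ᵥ v j) * (u j ⬝ᵥ p i)) := by
        exact Finset.sum_congr rfl fun j _ => key j
    _ ≤ ∑ j, ∑ i, σ i * (((q i ⬝ᵥ v j) ^ 2 + (u j ⬝ᵥ p i) ^ 2) / 2) := by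
        refine Finset.sum_le_sum fun j _ => Finset.sum_le_sum fun i _ => ?_
        have : (q i ⬝ᵥ v j) * (u j ⬝ᵥ p i) ≤ ((q i ⬝ᵥ v j) ^ 2 + (u j ⬝ᵥ p i) ^ 2) / 2 := by
          nlinarith [sq_nonneg ((q i ⬝ᵥ v j) - (u j ⬝ᵥ p i))]
        exact mul_le_mul_of_nonneg_left this (hσ i)
    _ = ∑ i, σ i * ((∑ j, (q i ⬝ᵥ v j) ^ 2) + ∑ j, (u j ⬝ᵥ p i) ^ 2) / 2 := by
        rw [Finset.sum_comm]
        refine Finset.sum_congr rfl fun i _ => ?_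
        rw [← Finset.mul_sum, ← Finset.sum_div, Finset.sum_add_distrib, mul_div_assoc]
    _ ≤ ∑ i, σ i * (1 + 1) / 2 := by
        refine Finset.sum_le_sum fun i _ => ?_
        have h1 : ∑ j, (q i ⬝ᵥ v j) ^ 2 ≤ 1 := by
          have := bessel v hvo hvn (q i)
          have h2 : ∑ j, (q i ⬝ᵥ v j) ^ 2 = ∑ j, (v j ⬝ᵥ q i) ^ 2 := by
            exact Finset.sum_congr rfl fun j _ => by rw [dotProduct_comm]
          rw [h2]
          exact le_trans this (hqn i)
        have h2 : ∑ j, (u j ⬝ᵥ p i) ^ 2 ≤ 1 := by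
          have := bessel u huo hun (p i)
          exact le_trans this (hpn i)
        have := hσ i
        rw [div_le_div_iff_of_pos_right (by norm_num : (0:ℝ) < 2)]
        nlinarith
    _ = ∑ i, σ i := by refine Finset.sum_congr rfl fun i _ => by ring
    _ = nuclearNorm A := hnn.symm

lemma nuclearNorm_triangle {m n : ℕ} (A B : Matrix (Fin m) (Fin n) ℝ) :
    nuclearNorm (A + B) ≤ nuclearNorm A + nuclearNorm B := by
  obtain ⟨σ, u, v, hσ, huo, hun, hvo, hvn, hcomp, hCv, huCv, hnn⟩ := exists_data (A + B)
  have h1 : nuclearNorm (A + B) = ∑ j, u j ⬝ᵥ ((A + B) *ᵥ v j) := by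
    rw [hnn]
    exact Finset.sum_congr rfl fun j _ => (huCv j).symm
  have h2 : ∀ j, u j ⬝ᵥ ((A + B) *ᵥ v j) = u j ⬝ᵥ (A *ᵥ v j) + u j ⬝ᵥ (B *ᵥ v j) := by
    intro j
    rw [Matrix.add_mulVec, dotProduct_add]
  rw [h1]
  calc ∑ j, u j ⬝ᵥ ((A + B) *ᵥ v j)
      = (∑ j, u j ⬝ᵥ (A *ᵥ v j)) + ∑ j, u j ⬝ᵥ (B *ᵥ v j) := by
        rw [← Finset.sum_add_distrib]
        exact Finset.sum_congr rfl fun j _ => h2 j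
    _ ≤ nuclearNorm A + nuclearNorm B :=
        add_le_add (dual_bound A u v huo hun hvo hvn) (dual_bound B u v huo hun hvo hvn)

lemma sqrt_congr {k : ℕ} {X Y : Matrix (Fin k) (Fin k) ℝ} (hX : X.PosSemidef)
    (hY : Y.PosSemidef) (h : X = Y) : hX.sqrt = hY.sqrt := by subst h; rfl

lemma nuclearNorm_congr {m n m' : ℕ} (A : Matrix (Fin m) (Fin n) ℝ)
    (B : Matrix (Fin m') (Fin n) ℝ) (h : Aᴴ * A = Bᴴ * B) :
    nuclearNorm A = nuclearNorm B := by
  show (Matrix.posSemidef_conjTranspose_mul_self A).sqrt.trace =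
    (Matrix.posSemidef_conjTranspose_mul_self B).sqrt.trace
  rw [sqrt_congr _ ((h ▸ Matrix.posSemidef_conjTranspose_mul_self A)) h]

lemma nuclearNorm_neg {m n : ℕ} (A : Matrix (Fin m) (Fin n) ℝ) :
    nuclearNorm (-A) = nuclearNorm A := by
  refine nuclearNorm_congr _ _ ?_
  simp

lemma nuclearNorm_add_orth {m n : ℕ} (A B : Matrix (Fin m) (Fin n) ℝ)
    (h1 : Aᴴ * B = 0) (h2 : A * Bᴴ = 0) :
    nuclearNorm (A + B) = nuclearNorm A + nuclearNorm B := by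
  have hX := Matrix.posSemidef_conjTranspose_mul_self A
  have hY := Matrix.posSemidef_conjTranspose_mul_self B
  -- A * hY.sqrt = 0
  have hAsY : A * hY.sqrt = 0 := by
    rw [← Matrix.self_mul_conjTranspose_eq_zero]
    have : (A * hY.sqrt)ᴴ = hY.sqrt * Aᴴ := by
      rw [Matrix.conjTranspose_mul, hY.posSemidef_sqrt.1]
    rw [this, Matrix.mul_assoc, ← Matrix.mul_assoc hY.sqrt hY.sqrt, hY.sqrt_mul_self,
      Matrix.mul_assoc Bᴴ B, ← Matrix.mul_assoc A Bᴴ, h2, Matrix.zero_mul]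
  have hsXsY : hX.sqrt * hY.sqrt = 0 := by
    rw [← Matrix.conjTranspose_mul_self_eq_zero]
    have hct : (hX.sqrt * hY.sqrt)ᴴ = hY.sqrt * hX.sqrt := by
      rw [Matrix.conjTranspose_mul, hX.posSemidef_sqrt.1, hY.posSemidef_sqrt.1]
    rw [hct]
    calc hY.sqrt * hX.sqrt * (hX.sqrt * hY.sqrt)
        = hY.sqrt * (hX.sqrt * hX.sqrt) * hY.sqrt := by
          rw [Matrix.mul_assoc, Matrix.mul_assoc, Matrix.mul_assoc]
      _ = hY.sqrt * (Aᴴ * A) * hY.sqrt := by rw [hX.sqrt_mul_self]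
      _ = (A * hY.sqrt)ᴴ * (A * hY.sqrt) := by
          rw [Matrix.conjTranspose_mul, hY.posSemidef_sqrt.1]
          rw [Matrix.mul_assoc, Matrix.mul_assoc, Matrix.mul_assoc]
      _ = 0 := by rw [hAsY]; simp
  have hsum : (A + B)ᴴ * (A + B) = Aᴴ * A + Bᴴ * B := by
    have hBA : Bᴴ * A = 0 := by
      have h := congrArg Matrix.conjTranspose h1
      rw [Matrix.conjTranspose_mul, Matrix.conjTranspose_conjTranspose,
        Matrix.conjTranspose_zero] at h
      exact h
    rw [Matrix.conjTranspose_add, Matrix.add_mul, Matrix.mul_add, Matrix.mul_add, h1, hBA]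
    simp
  have hpsd : (hX.sqrt + hY.sqrt).PosSemidef := hX.posSemidef_sqrt.add hY.posSemidef_sqrt
  have hsq : (hX.sqrt + hY.sqrt) ^ 2 = Aᴴ * A + Bᴴ * B := by
    have hYX : hY.sqrt * hX.sqrt = 0 := by
      have h := congrArg Matrix.conjTranspose hsXsY
      rw [Matrix.conjTranspose_mul, hX.posSemidef_sqrt.1, hY.posSemidef_sqrt.1,
        Matrix.conjTranspose_zero] at h
      exact h
    rw [sq, Matrix.add_mul, Matrix.mul_add, Matrix.mul_add, hX.sqrt_mul_self, hY.sqrt_mul_self,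
      hsXsY, hYX]
    simp
  have hXY : (Aᴴ * A + Bᴴ * B).PosSemidef := hX.add hY
  have hsqrt_eq : hX.sqrt + hY.sqrt = hXY.sqrt := hpsd.eq_sqrt_of_sq_eq hXY hsq
  have : nuclearNorm (A + B) = hXY.sqrt.trace := by
    show (Matrix.posSemidef_conjTranspose_mul_self (A+B)).sqrt.trace = _
    rw [sqrt_congr _ ((hsum ▸ Matrix.posSemidef_conjTranspose_mul_self (A+B))) hsum]
  rw [this, ← hsqrt_eq, Matrix.trace_add]
  rfl

end NucAux

/-- For `M = UΣVᵀ` with orthonormal `U, V`, and the projections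
`P^⊥(E) = UUᵀE + EVVᵀ − UUᵀEVVᵀ`, `P(E) = E − P^⊥(E)`, one has
`‖M + E‖_* ≥ ‖M‖_* + ‖P(E)‖_* − ‖P^⊥(E)‖_*`. -/
theorem nuclearNorm_add_ge_proj (m n r : ℕ)
    (M : Matrix (Fin m) (Fin n) ℝ)
    (U : Matrix (Fin m) (Fin r) ℝ) (V : Matrix (Fin n) (Fin r) ℝ)
    (S : Matrix (Fin r) (Fin r) ℝ) (hS : S.IsDiag)
    (hU : Uᵀ * U = 1) (hV : Vᵀ * V = 1)
    (hM : M = U * S * Vᵀ) (hrank : M.rank = r)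
    (E : Matrix (Fin m) (Fin n) ℝ) :
    nuclearNorm M
      + nuclearNorm (E - (U * Uᵀ * E + E * (V * Vᵀ) - U * Uᵀ * E * (V * Vᵀ)))
      - nuclearNorm (U * Uᵀ * E + E * (V * Vᵀ) - U * Uᵀ * E * (V * Vᵀ))
      ≤ nuclearNorm (M + E) := by
  set Pp := U * Uᵀ * E + E * (V * Vᵀ) - U * Uᵀ * E * (V * Vᵀ) with hPp
  set PE := E - Pp with hPE
  have hUPE : Uᵀ * PE = 0 := by
    rw [hPE, hPp]
    simp only [Matrix.mul_sub, Matrix.mul_add, ← Matrix.mul_assoc, hU, Matrix.one_mul]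
    abel
  have hPEV : PE * V = 0 := by
    rw [hPE, hPp]
    simp only [Matrix.sub_mul, Matrix.add_mul, Matrix.mul_assoc, hV, Matrix.mul_one]
    abel
  have h1 : Mᴴ * PE = 0 := by
    rw [hM, Matrix.conjTranspose_mul, Matrix.conjTranspose_mul,
      U.conjTranspose_eq_transpose_of_trivial, Matrix.mul_assoc, Matrix.mul_assoc, hUPE]
    simp
  have h2 : M * PEᴴ = 0 := by
    have hVPE : Vᵀ * PEᴴ = 0 := by
      rw [PE.conjTranspose_eq_transpose_of_trivial, ← Matrix.transpose_mul, hPEV]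
      simp
    rw [hM, Matrix.mul_assoc, hVPE, Matrix.mul_zero]
  have hadd : nuclearNorm (M + PE) = nuclearNorm M + nuclearNorm PE :=
    NucAux.nuclearNorm_add_orth _ _ h1 h2
  have hsplit : M + PE = (M + E) + (-Pp) := by rw [hPE]; abel
  have htri : nuclearNorm (M + PE) ≤ nuclearNorm (M + E) + nuclearNorm Pp := by
    rw [hsplit]
    calc nuclearNorm ((M + E) + (-Pp))
        ≤ nuclearNorm (M + E) + nuclearNorm (-Pp) := NucAux.nuclearNorm_triangle _ _
      _ = nuclearNorm (M + E) + nuclearNorm Pp := by rw [NucAux.nuclearNorm_neg]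
  linarith
end
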